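/- For every m ∈ {0,1,…,r+1} and every k ∈ ℤ, H_m(k) = H_m(k+1). In other words, the hard-particle partition functions H_m on the graph G_r, evaluated at the weights γ_i(k), are conserved quantities of the A_r Q-system evolution Q_{α,k} ↦ Q_{α,k+1}. -/

import Mathlib

open Finset

/-- Adjacency in the graph `G_r` on vertex set `{1, …, 2r+1}`: edges
`{i, i+1}` for `1 ≤ i ≤ 2r`, together with `{2α, 2α+2}` for `1 ≤ α ≤ r-1`. -/
def GrAdj (r i j : ℕ) : Prop :=
  (max i j = min i j + 1 ∧ 1 ≤ min i j ∧ max i j ≤ 2 * r + 1) ∨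
  (Even (min i j) ∧ max i j = min i j + 2 ∧ 2 ≤ min i j ∧ max i j ≤ 2 * r)

instance (r i j : ℕ) : Decidable (GrAdj r i j) := by
  unfold GrAdj; infer_instance

/-- The independent sets (hard-particle configurations) of `G_r`:
subsets of `{1, …, 2r+1}` containing no pair of adjacent vertices. -/
def IndepSets (r : ℕ) : Finset (Finset ℕ) :=
  (Finset.Icc 1 (2 * r + 1)).powerset.filter (fun I => ∀ i ∈ I, ∀ j ∈ I, ¬ GrAdj r i j)

/-- The loop weights `γ_i(k)` of the `A_r` Q-system:
`γ_{2α-1}(k) = Q_{α-1,k} Q_{α,k+1} / (Q_{α,k} Q_{α-1,k+1})` and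
`γ_{2α}(k) = Q_{α-1,k} Q_{α+1,k+1} / (Q_{α,k} Q_{α,k+1})`. -/
noncomputable def gammaWt (Q : ℕ → ℤ → ℂ) (k : ℤ) (i : ℕ) : ℂ :=
  if i % 2 = 1 then
    -- i = 2α - 1 with α = (i+1)/2
    Q ((i + 1) / 2 - 1) k * Q ((i + 1) / 2) (k + 1) /
      (Q ((i + 1) / 2) k * Q ((i + 1) / 2 - 1) (k + 1))
  else
    -- i = 2α with α = i/2
    Q (i / 2 - 1) k * Q (i / 2 + 1) (k + 1) / (Q (i / 2) k * Q (i / 2) (k + 1))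

/-- The Hamiltonian `H_m(k)`: the hard-particle partition function of `G_r`
with weights `γ_i(k)`, summed over independent sets of cardinality `m`. -/
noncomputable def Ham (r : ℕ) (Q : ℕ → ℤ → ℂ) (m : ℕ) (k : ℤ) : ℂ :=
  ∑ I ∈ (IndepSets r).filter (fun I => I.card = m), ∏ i ∈ I, gammaWt Q k i

/-- The Hamiltonians `H_m` are conserved quantities of the `A_r` Q-system
evolution `Q_{α,k} ↦ Q_{α,k+1}`. -/
noncomputable def aA (Q : ℕ → ℤ → ℂ) (α : ℕ) (k : ℤ) : ℂ :=
  Q (α - 1) k * Q α (k + 1) / (Q α k * Q (α - 1) (k + 1))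

noncomputable def bB (r : ℕ) (Q : ℕ → ℤ → ℂ) (α : ℕ) (k : ℤ) : ℂ :=
  if α = 0 ∨ r + 1 ≤ α then 0
  else Q (α - 1) k * Q (α + 1) (k + 1) / (Q α k * Q α (k + 1))


lemma gamma_odd (Q : ℕ → ℤ → ℂ) (k : ℤ) (α : ℕ) :
    gammaWt Q k (2 * α + 1) = aA Q (α + 1) k := by
  have h1 : (2 * α + 1) % 2 = 1 := by omega
  have h2 : (2 * α + 1 + 1) / 2 = α + 1 := by omega
  rw [gammaWt, if_pos h1, h2, aA]

lemma gamma_even (r : ℕ) (Q : ℕ → ℤ → ℂ) (k : ℤ) (α : ℕ) (h1 : 1 ≤ α) (h2 : α ≤ r) :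
    gammaWt Q k (2 * α) = bB r Q α k := by
  have e1 : ¬ (2 * α) % 2 = 1 := by omega
  have e2 : (2 * α) / 2 = α := by omega
  have e3 : ¬ (α = 0 ∨ r + 1 ≤ α) := by omega
  rw [gammaWt, if_neg e1, e2, bB, if_neg e3]


noncomputable def Sk (r : ℕ) (Q : ℕ → ℤ → ℂ) (k : ℤ) (j m : ℕ) : ℂ :=
  ∑ I ∈ (Finset.Icc 1 j).powerset.filter
      (fun I => (∀ a ∈ I, ∀ b ∈ I, ¬ GrAdj r a b) ∧ I.card = m),
    ∏ i ∈ I, gammaWt Q k i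

lemma Sk_card_zero (r : ℕ) (Q : ℕ → ℤ → ℂ) (k : ℤ) (j : ℕ) : Sk r Q k j 0 = 1 := by
  rw [Sk]
  rw [show ((Finset.Icc 1 j).powerset.filter
      (fun I => (∀ a ∈ I, ∀ b ∈ I, ¬ GrAdj r a b) ∧ I.card = 0)) = {∅} from ?_]
  · simp
  · ext I
    simp only [mem_filter, mem_powerset, mem_singleton, Finset.card_eq_zero]
    constructor
    · rintro ⟨-, -, h⟩; exact h
    · rintro rfl; simp

lemma Sk_zero_left (r : ℕ) (Q : ℕ → ℤ → ℂ) (k : ℤ) (m : ℕ) :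
    Sk r Q k 0 (m + 1) = 0 := by
  rw [Sk]
  apply Finset.sum_eq_zero
  intro I hI
  simp only [mem_filter, mem_powerset] at hI
  obtain ⟨hsub, -, hcard⟩ := hI
  exfalso
  have : I = ∅ := Finset.subset_empty.mp (by simpa using hsub)
  simp [this] at hcard

lemma Sk_split (r : ℕ) (Q : ℕ → ℤ → ℂ) (k : ℤ) (v d m : ℕ)
    (hv : 1 ≤ v) (hd : d < v)
    (h1 : ∀ w, 1 ≤ w → w ≤ d → ¬ GrAdj r w v)
    (h2 : ∀ w, 1 ≤ w → w < v → ¬ GrAdj r w v → w ≤ d) :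
    Sk r Q k v (m+1) = Sk r Q k (v-1) (m+1) + gammaWt Q k v * Sk r Q k d m := by
  classical
  have hsym : ∀ a b, GrAdj r a b → GrAdj r b a := by
    intro a b h; unfold GrAdj at h ⊢; rw [max_comm, min_comm]; exact h
  have hirr : ∀ a, ¬ GrAdj r a a := by
    intro a; unfold GrAdj; omega
  rw [Sk, ← Finset.sum_filter_add_sum_filter_not _ (fun I => v ∈ I), add_comm]
  congr 1
  · -- v ∉ I part = Sk (v-1) (m+1)
    rw [Sk]
    apply Finset.sum_congr _ (fun _ _ => rfl)
    ext I
    simp only [mem_filter, mem_powerset]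
    constructor
    · rintro ⟨⟨hsub, h⟩, hv'⟩
      refine ⟨fun w hw => ?_, h⟩
      have h3 := hsub hw
      have hne : w ≠ v := fun e => hv' (e ▸ hw)
      simp only [Finset.mem_Icc] at h3 ⊢
      omega
    · rintro ⟨hsub, h⟩
      have hnv : v ∉ I := fun hvI => by
        have := hsub hvI; simp only [Finset.mem_Icc] at this; omega
      refine ⟨⟨fun w hw => ?_, h⟩, hnv⟩
      have h3 := hsub hw
      simp only [Finset.mem_Icc] at h3 ⊢
      omega
  · -- v ∈ I part = gammaWt * Sk d m
    rw [Sk, Finset.mul_sum]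
    refine Finset.sum_nbij' (fun I => I.erase v) (fun J => insert v J) ?_ ?_ ?_ ?_ ?_
    · intro I hI
      simp only [mem_filter, mem_powerset] at hI ⊢
      obtain ⟨⟨hsub, hind, hcard⟩, hvI⟩ := hI
      refine ⟨?_, ?_, ?_⟩
      · intro w hw
        obtain ⟨hwv, hwI⟩ := Finset.mem_erase.mp hw
        have h3 := hsub hwI
        simp only [Finset.mem_Icc] at h3 ⊢
        exact ⟨h3.1, h2 w h3.1 (lt_of_le_of_ne h3.2 hwv) (hind w hwI v hvI)⟩
      · exact fun a ha b hb => hind a (Finset.mem_of_mem_erase ha) b (Finset.mem_of_mem_erase hb)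
      · rw [Finset.card_erase_of_mem hvI, hcard]; rfl
    · intro J hJ
      simp only [mem_filter, mem_powerset] at hJ ⊢
      obtain ⟨hsub, hind, hcard⟩ := hJ
      have hvJ : v ∉ J := fun hvJ => by
        have := hsub hvJ; simp only [Finset.mem_Icc] at this; omega
      refine ⟨⟨?_, ?_, ?_⟩, Finset.mem_insert_self v J⟩
      · intro w hw
        rcases Finset.mem_insert.mp hw with rfl | hwJ
        · simp only [Finset.mem_Icc]; omega
        · have := hsub hwJ; simp only [Finset.mem_Icc] at this ⊢; omega
      · intro a ha b hb
        rcases Finset.mem_insert.mp ha with rfl | haJ <;>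
          rcases Finset.mem_insert.mp hb with rfl | hbJ
        · exact hirr _
        · have := hsub hbJ; simp only [Finset.mem_Icc] at this
          exact fun h => (h1 b this.1 this.2) (hsym _ _ h)
        · have := hsub haJ; simp only [Finset.mem_Icc] at this
          exact h1 a this.1 this.2
        · exact hind a haJ b hbJ
      · rw [Finset.card_insert_of_notMem hvJ, hcard]
    · intro I hI
      simp only [mem_filter] at hI
      exact Finset.insert_erase hI.2
    · intro J hJ
      simp only [mem_filter, mem_powerset] at hJ
      have hvJ : v ∉ J := fun hvJ => by
        have := hJ.1 hvJ; simp only [Finset.mem_Icc] at this; omega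
      exact Finset.erase_insert hvJ
    · intro I hI
      simp only [mem_filter] at hI
      rw [← Finset.prod_erase_mul _ _ hI.2, mul_comm]

section Identities

variable (r : ℕ) (Q : ℕ → ℤ → ℂ)
variable (hne : ∀ α ≤ r + 1, ∀ k : ℤ, Q α k ≠ 0)
variable (h0 : ∀ k : ℤ, Q 0 k = 1) (htop : ∀ k : ℤ, Q (r + 1) k = 1)
variable (hrec : ∀ α, 1 ≤ α → α ≤ r → ∀ k : ℤ,
      Q α (k + 1) * Q α (k - 1) = Q α k ^ 2 + Q (α + 1) k * Q (α - 1) k)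

include hrec in
lemma key_rec (β : ℕ) (hβ : β ≤ r) (hβ1 : 1 ≤ β) (k' : ℤ) :
    Q β (k' + 2) * Q β k' = Q β (k' + 1) ^ 2 + Q (β + 1) (k' + 1) * Q (β - 1) (k' + 1) := by
  have h := hrec β hβ1 hβ (k' + 1)
  rw [show (k' + 1 + 1 : ℤ) = k' + 2 by ring, show (k' + 1 - 1 : ℤ) = k' by ring] at h
  exact h

include hne h0 htop hrec in
lemma idI (α : ℕ) (hα : α ≤ r) (k : ℤ) :
    aA Q (α + 1) (k + 1) + bB r Q α (k + 1) = aA Q (α + 1) k + bB r Q (α + 1) k := by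
  have hIa : aA Q (α + 1) (k + 1) + bB r Q α (k + 1)
      = Q (α + 1) (k + 2) * Q α k / (Q (α + 1) (k + 1) * Q α (k + 1)) := by
    rcases Nat.eq_zero_or_pos α with rfl | hpos
    · rw [bB, if_pos (Or.inl rfl), aA]
      simp only [Nat.add_sub_cancel, h0]
      rw [show (k + 1 + 1 : ℤ) = k + 2 by ring]
      field_simp
      ring
    · have e1 := key_rec r Q hrec α hα hpos k
      have hQk : Q α k ≠ 0 := hne α (by omega) k
      have hsub : Q α (k + 2)
          = (Q α (k + 1) ^ 2 + Q (α + 1) (k + 1) * Q (α - 1) (k + 1)) / Q α k := by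
        rw [eq_div_iff hQk]; linear_combination e1
      have hD : Q α (k + 1) ^ 2 + Q (α + 1) (k + 1) * Q (α - 1) (k + 1) ≠ 0 := by
        rw [← e1]; exact mul_ne_zero (hne α (by omega) _) hQk
      rw [aA, bB, if_neg (by omega : ¬ (α = 0 ∨ r + 1 ≤ α))]
      simp only [Nat.add_sub_cancel]
      rw [show (k + 1 + 1 : ℤ) = k + 2 by ring, hsub]
      have n1 : Q (α + 1) (k + 1) ≠ 0 := hne _ (by omega) _
      have n2 : Q α (k + 1) ≠ 0 := hne _ (by omega) _
      field_simp
  have hIb : aA Q (α + 1) k + bB r Q (α + 1) k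
      = Q (α + 1) (k + 2) * Q α k / (Q (α + 1) (k + 1) * Q α (k + 1)) := by
    rcases Nat.lt_or_ge α r with hlt | hge
    · -- α + 1 ≤ r : use recursion at α+1
      have e1 := key_rec r Q hrec (α + 1) (by omega) (by omega) k
      simp only [Nat.add_sub_cancel] at e1
      have hQk : Q (α + 1) k ≠ 0 := hne _ (by omega) k
      have hsub : Q (α + 1) (k + 2)
          = (Q (α + 1) (k + 1) ^ 2 + Q (α + 1 + 1) (k + 1) * Q α (k + 1)) / Q (α + 1) k := by
        rw [eq_div_iff hQk]; linear_combination e1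
      have hD : Q (α + 1) (k + 1) ^ 2 + Q (α + 1 + 1) (k + 1) * Q α (k + 1) ≠ 0 := by
        rw [← e1]; exact mul_ne_zero (hne _ (by omega) _) hQk
      rw [aA, bB, if_neg (by omega : ¬ (α + 1 = 0 ∨ r + 1 ≤ α + 1))]
      simp only [Nat.add_sub_cancel]
      rw [hsub]
      have n1 : Q (α + 1) (k + 1) ≠ 0 := hne _ (by omega) _
      have n2 : Q α (k + 1) ≠ 0 := hne _ (by omega) _
      have n3 : Q α k ≠ 0 := hne _ (by omega) _
      field_simp
    · -- α = r
      have hr : α = r := le_antisymm hα hge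
      subst hr
      rw [aA, bB, if_pos (Or.inr (by omega)), htop, htop, htop]
      simp only [Nat.add_sub_cancel]
      have n2 : Q α (k + 1) ≠ 0 := hne _ (by omega) _
      have n3 : Q α k ≠ 0 := hne _ (by omega) _
      field_simp
      ring
  rw [hIa, hIb]

include hne in
lemma idII (α : ℕ) (hα1 : 1 ≤ α) (hα : α ≤ r) (k : ℤ) :
    aA Q (α + 1) (k + 1) * bB r Q α k = bB r Q α (k + 1) * aA Q α k := by
  rw [aA, aA, bB, bB, if_neg (by omega : ¬ (α = 0 ∨ r + 1 ≤ α)),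
    if_neg (by omega : ¬ (α = 0 ∨ r + 1 ≤ α))]
  simp only [Nat.add_sub_cancel]
  rw [show (k + 1 + 1 : ℤ) = k + 2 by ring]
  have n1 : Q (α + 1) (k + 1) ≠ 0 := hne _ (by omega) _
  have n2 : Q α (k + 1) ≠ 0 := hne _ (by omega) _
  have n3 : Q α k ≠ 0 := hne _ (by omega) _
  have n4 : Q α (k + 2) ≠ 0 := hne _ (by omega) _
  have n5 : Q (α - 1) (k + 1) ≠ 0 := hne _ (by omega) _
  field_simp

end Identities

lemma Sk_rec (r : ℕ) (Q : ℕ → ℤ → ℂ) (k : ℤ) (α m : ℕ) (hα : α ≤ r) :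
    Sk r Q k (2 * α + 1) (m + 1) =
      Sk r Q k (2 * α - 1) (m + 1) + aA Q (α + 1) k * Sk r Q k (2 * α - 1) m
        + bB r Q α k * Sk r Q k (2 * α - 3) m := by
  rcases α with _ | β
  · -- α = 0
    have hs := Sk_split r Q k 1 0 m (by omega) (by omega)
      (fun w hw1 hw2 => by omega)
      (fun w hw1 hw2 _ => by omega)
    have g : gammaWt Q k 1 = aA Q 1 k := by
      have := gamma_odd Q k 0
      norm_num at this
      exact this
    rw [hs, g, bB, if_pos (Or.inl rfl)]
    ring
  · -- α = β + 1
    have hβr : β + 1 ≤ r := hα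
    have g1 : gammaWt Q k (2 * β + 3) = aA Q (β + 1 + 1) k := by
      have := gamma_odd Q k (β + 1)
      rwa [show 2 * (β + 1) + 1 = 2 * β + 3 by omega] at this
    have g2 : gammaWt Q k (2 * β + 2) = bB r Q (β + 1) k := by
      have := gamma_even r Q k (β + 1) (by omega) hβr
      rwa [show 2 * (β + 1) = 2 * β + 2 by omega] at this
    have hs1 := Sk_split r Q k (2 * β + 3) (2 * β + 1) m (by omega) (by omega)
      (fun w hw1 hw2 h => by
        unfold GrAdj at h; rw [Nat.even_iff] at h; omega)
      (fun w hw1 hw2 h => by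
        unfold GrAdj at h; rw [Nat.even_iff] at h; omega)
    have hs2 := Sk_split r Q k (2 * β + 2) (2 * β - 1) (m) (by omega) (by omega)
      (fun w hw1 hw2 h => by
        unfold GrAdj at h; rw [Nat.even_iff] at h; omega)
      (fun w hw1 hw2 h => by
        unfold GrAdj at h; rw [Nat.even_iff] at h; omega)
    rw [show 2 * (β + 1) + 1 = 2 * β + 3 by omega, show 2 * (β + 1) - 1 = 2 * β + 1 by omega,
      show 2 * (β + 1) - 3 = 2 * β - 1 by omega]
    rw [show (2 * β + 3 - 1 : ℕ) = 2 * β + 2 by omega] at hs1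
    rw [show (2 * β + 2 - 1 : ℕ) = 2 * β + 1 by omega] at hs2
    rw [hs1, hs2, g1, g2]
    ring


lemma sk_gauge (r : ℕ) (Q : ℕ → ℤ → ℂ)
    (hidI : ∀ α ≤ r, ∀ k : ℤ,
      aA Q (α + 1) (k + 1) + bB r Q α (k + 1) = aA Q (α + 1) k + bB r Q (α + 1) k)
    (hidII : ∀ α, 1 ≤ α → α ≤ r → ∀ k : ℤ,
      aA Q (α + 1) (k + 1) * bB r Q α k = bB r Q α (k + 1) * aA Q α k)
    (k : ℤ) :
    ∀ α, α ≤ r + 1 → ∀ m, Sk r Q (k + 1) (2 * α - 1) (m + 1)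
      = Sk r Q k (2 * α - 1) (m + 1) + bB r Q α k * Sk r Q k (2 * α - 3) m := by
  intro α
  induction α using Nat.strong_induction_on with
  | _ α ih =>
    match α with
    | 0 =>
      intro _ m
      simp only [show 2 * 0 - 1 = 0 by omega, show 2 * 0 - 3 = 0 by omega]
      rw [Sk_zero_left, Sk_zero_left, bB, if_pos (Or.inl rfl)]
      ring
    | 1 =>
      intro hα1 m
      simp only [show 2 * 1 - 1 = 1 by omega, show 2 * 1 - 3 = 0 by omega]
      have h1 := Sk_rec r Q (k + 1) 0 m (by omega)
      have h2 := Sk_rec r Q k 0 m (by omega)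
      simp only [show 2 * 0 + 1 = 1 by omega, show 2 * 0 - 1 = 0 by omega,
        show 2 * 0 - 3 = 0 by omega] at h1 h2
      rw [h1, h2]
      have hb0 : ∀ k' : ℤ, bB r Q 0 k' = 0 := fun k' => by rw [bB, if_pos (Or.inl rfl)]
      rw [hb0, hb0]
      rcases m with _ | M
      · rw [Sk_card_zero, Sk_card_zero, Sk_zero_left, Sk_zero_left]
        have hI := hidI 0 (by omega) k
        rw [hb0] at hI
        -- hI : aA Q 1 (k+1) + 0 = aA Q 1 k + bB r Q 1 k
        have : aA Q (0+1) (k + 1) = aA Q (0+1) k + bB r Q (0+1) k := by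
          norm_num at hI ⊢; linear_combination hI
        rw [this]; ring
      · rw [Sk_zero_left, Sk_zero_left, Sk_zero_left, Sk_zero_left]
        ring
    | (β + 2) =>
      intro hα m
      have hβ1r : β + 1 ≤ r := by omega
      have hI := hidI (β + 1) hβ1r k
      have hII := hidII (β + 1) (by omega) hβ1r k
      -- normalize goal indices
      simp only [show 2 * (β + 2) - 1 = 2 * (β + 1) + 1 by omega,
        show 2 * (β + 2) - 3 = 2 * (β + 1) - 1 by omega]
      rw [Sk_rec r Q (k + 1) (β + 1) m hβ1r, Sk_rec r Q k (β + 1) m hβ1r]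
      rw [ih (β + 1) (by omega) (by omega) m]
      rcases m with _ | M
      · -- m = 0
        rw [Sk_card_zero, Sk_card_zero, Sk_card_zero, Sk_card_zero]
        linear_combination hI
      · -- m = M + 1
        rw [ih (β + 1) (by omega) (by omega) M]
        simp only [show 2 * (β + 1) - 3 = 2 * β - 1 by omega]
        rw [ih β (by omega) (by omega) M]
        simp only [show 2 * (β + 1) - 1 = 2 * β + 1 by omega]
        rw [Sk_rec r Q k β M (by omega)]
        set X1 := Sk r Q k (2 * β - 1) (M + 1)
        set X2 := Sk r Q k (2 * β - 1) M
        set X3 := Sk r Q k (2 * β - 3) M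
        linear_combination (X1 + aA Q (β + 1) k * X2 + bB r Q β k * X3) * hI + X2 * hII

theorem Ham_conserved_Ar
    (r : ℕ) (hr : 1 ≤ r) (Q : ℕ → ℤ → ℂ)
    (hne : ∀ α ≤ r + 1, ∀ k : ℤ, Q α k ≠ 0)
    (h0 : ∀ k : ℤ, Q 0 k = 1) (htop : ∀ k : ℤ, Q (r + 1) k = 1)
    (hrec : ∀ α, 1 ≤ α → α ≤ r → ∀ k : ℤ,
      Q α (k + 1) * Q α (k - 1) = Q α k ^ 2 + Q (α + 1) k * Q (α - 1) k) :
    ∀ m ≤ r + 1, ∀ k : ℤ, Ham r Q m k = Ham r Q m (k + 1) := by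
  intro m hm k
  have hHam : ∀ k' : ℤ, Ham r Q m k' = Sk r Q k' (2 * r + 1) m := by
    intro k'
    rw [Ham, IndepSets, Sk, Finset.filter_filter]
  rw [hHam, hHam]
  rcases m with _ | M
  · rw [Sk_card_zero, Sk_card_zero]
  · have h := sk_gauge r Q (fun α hα k' => idI r Q hne h0 htop hrec α hα k')
      (fun α h1 h2 k' => idII r Q hne α h1 h2 k') k (r + 1) (le_refl _) M
    rw [show 2 * (r + 1) - 1 = 2 * r + 1 by omega] at h
    rw [h, bB, if_pos (Or.inr (by omega))]
    ring
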